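/- Let W ⊆ ℝ^d be a closed convex set and let Φ, Ψ : ℝ^d → ℝ be differentiable, with Φ μ-strongly convex. Let w_Φ = argmin_{w ∈ W} Φ(w) and w_Ψ = argmin_{w ∈ W} Ψ(w). If ‖∇Φ(w) − ∇Ψ(w)‖ ≤ ε for all w ∈ W, then ‖w_Φ − w_Ψ‖ ≤ ε/μ. -/
import Mathlib


open RealInnerProductSpace

/-- If `Φ` is `μ`-strongly convex, `wΦ` and `wΨ` are the constrained minimizers of `Φ` and `Ψ`
on a closed convex set `W` (expressed by first-order optimality conditions), and the gradients
of `Φ` and `Ψ` differ by at most `ε` on `W`, then `‖wΦ − wΨ‖ ≤ ε/μ`. -/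
theorem minimizer_lipschitz_in_objective {d : ℕ} (μ ε : ℝ) (hμ : 0 < μ) (hε : 0 ≤ ε)
    (W : Set (EuclideanSpace ℝ (Fin d))) (hW : Convex ℝ W) (hWc : IsClosed W)
    (Φ' Ψ' : EuclideanSpace ℝ (Fin d) → EuclideanSpace ℝ (Fin d))
    (hmono : ∀ x y, ⟪Φ' x - Φ' y, x - y⟫ ≥ μ * ‖x - y‖ ^ 2)
    (wΦ wΨ : EuclideanSpace ℝ (Fin d)) (hwΦ : wΦ ∈ W) (hwΨ : wΨ ∈ W)
    (hoptΦ : ∀ w ∈ W, ⟪w - wΦ, Φ' wΦ⟫ ≥ 0)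
    (hoptΨ : ∀ w ∈ W, ⟪w - wΨ, Ψ' wΨ⟫ ≥ 0)
    (hclose : ∀ w ∈ W, ‖Φ' w - Ψ' w‖ ≤ ε) :
    ‖wΦ - wΨ‖ ≤ ε / μ := by
  have h1 := hmono wΦ wΨ
  have h2 := hoptΦ wΨ hwΨ
  have h3 := hoptΨ wΦ hwΦ
  have h4 := hclose wΨ hwΨ
  -- μ‖wΦ-wΨ‖² ≤ ⟪Φ'wΦ - Φ'wΨ, wΦ-wΨ⟫ ≤ ⟪Ψ'wΨ - Φ'wΨ, wΦ-wΨ⟫ ≤ ε‖wΦ-wΨ‖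
  have key : μ * ‖wΦ - wΨ‖ ^ 2 ≤ ε * ‖wΦ - wΨ‖ := by
    calc μ * ‖wΦ - wΨ‖ ^ 2 ≤ ⟪Φ' wΦ - Φ' wΨ, wΦ - wΨ⟫ := h1
    _ ≤ ⟪Ψ' wΨ - Φ' wΨ, wΦ - wΨ⟫ := by
        have e1 : ⟪Φ' wΦ, wΦ - wΨ⟫ ≤ 0 := by
          have h2' : (0:ℝ) ≤ ⟪Φ' wΦ, wΨ - wΦ⟫ := by rwa [real_inner_comm] at h2
          have heq : ⟪Φ' wΦ, wΨ - wΦ⟫ = -⟪Φ' wΦ, wΦ - wΨ⟫ := by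
            rw [← neg_sub, inner_neg_right]
          linarith
        have e2 : ⟪Ψ' wΨ, wΦ - wΨ⟫ ≥ 0 := by rwa [real_inner_comm]
        have := inner_sub_left (𝕜 := ℝ) (Φ' wΦ) (Φ' wΨ) (wΦ - wΨ)
        have := inner_sub_left (𝕜 := ℝ) (Ψ' wΨ) (Φ' wΨ) (wΦ - wΨ)
        linarith
    _ ≤ ‖Ψ' wΨ - Φ' wΨ‖ * ‖wΦ - wΨ‖ := real_inner_le_norm _ _
    _ ≤ ε * ‖wΦ - wΨ‖ := by
        have : ‖Ψ' wΨ - Φ' wΨ‖ = ‖Φ' wΨ - Ψ' wΨ‖ := norm_sub_rev _ _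
        have hn : (0:ℝ) ≤ ‖wΦ - wΨ‖ := norm_nonneg _
        nlinarith
  rcases eq_or_lt_of_le (norm_nonneg (wΦ - wΨ)) with h | h
  · rw [← h]; positivity
  · rw [le_div_iff₀ hμ]
    nlinarith
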